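/- Under the pipeline scheduling model, the completion time of any batching strategy B_1,...,B_K admits the closed form T = max over 1 ≤ k ≤ K of [ γ·e_k + Σ_{j=k}^{K} (α + β·|B_j|) ], where e_k denotes the index of the last token of batch B_k. -/

import Mathlib

/-- Pipeline fold step: state is (tokens generated so far, communication finish time).
Generating a batch of size `b` finishes at time `γ * (tokens so far + b)`; its
communication starts at the max of the previous communication finish and that
generation finish, and takes `α + β * b`. -/
def pipeStep (α β γ : ℝ) (s : ℕ × ℝ) (b : ℕ) : ℕ × ℝ :=
  (s.1 + b, max s.2 (γ * ((s.1 + b : ℕ) : ℝ)) + α + β * (b : ℝ))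

/-- Completion time of a batching strategy given by its list of batch sizes. -/
def complTime (α β γ : ℝ) (l : List ℕ) : ℝ :=
  (l.foldl (pipeStep α β γ) (0, 0)).2

/-- A list of batch sizes is a batching of the first `N` tokens: all batches
nonempty and sizes summing to `N`. -/
def IsBatching (l : List ℕ) (N : ℕ) : Prop :=
  (∀ b ∈ l, 0 < b) ∧ l.sum = N

/-- The set of completion times achievable by batchings of the first `N` tokens. -/
def Times (α β γ : ℝ) (N : ℕ) : Set ℝ :=
  {t : ℝ | ∃ l : List ℕ, IsBatching l N ∧ t = complTime α β γ l}

private lemma sup'_range_shift (f : ℕ → ℝ) (m : ℕ) (hm : 0 < m) :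
    (Finset.range (m + 1)).sup' (Finset.nonempty_range_iff.mpr (Nat.succ_ne_zero m)) f
      = max (f 0) ((Finset.range m).sup' (Finset.nonempty_range_iff.mpr hm.ne') (fun k => f (k + 1))) := by
  apply le_antisymm
  · apply Finset.sup'_le
    intro k hk
    rcases k with _ | j
    · exact le_max_left _ _
    · have hj : j < m := by have := Finset.mem_range.mp hk; omega
      exact le_max_of_le_right
        (Finset.le_sup' (fun k => f (k + 1)) (Finset.mem_range.mpr hj))
  · apply max_le
    · exact Finset.le_sup' _ (Finset.mem_range.mpr (by omega))
    · apply Finset.sup'_le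
      intro k hk
      have hk' : k + 1 < m + 1 := by have := Finset.mem_range.mp hk; omega
      exact Finset.le_sup' f (Finset.mem_range.mpr hk')

private lemma foldl_snd_eq (α β γ : ℝ) :
    ∀ (l : List ℕ) (hl : l ≠ []) (n : ℕ) (t : ℝ),
      (l.foldl (pipeStep α β γ) (n, t)).2 =
        max (t + ((l.map (fun s => α + β * (s : ℝ))).sum))
          ((Finset.range l.length).sup' (Finset.nonempty_range_iff.mpr (by simpa using hl))
            (fun k => γ * (((n + (l.take (k + 1)).sum : ℕ)) : ℝ)
              + ((l.drop k).map (fun s => α + β * (s : ℝ))).sum)) := by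
  intro l
  induction l with
  | nil => intro h; exact absurd rfl h
  | cons b l' ih =>
    intro _ n t
    rcases eq_or_ne l' [] with rfl | hl'
    · simp [pipeStep, max_add_add_right, add_assoc]
    · have hlen : 0 < l'.length := List.length_pos_iff.mpr hl'
      have step : List.foldl (pipeStep α β γ) (n, t) (b :: l')
          = List.foldl (pipeStep α β γ)
              (n + b, max t (γ * ((n + b : ℕ) : ℝ)) + α + β * b) l' := by
        simp [pipeStep]
      rw [step, ih hl' (n + b) _]
      have hshift :
          (Finset.range (b :: l').length).sup'
              (Finset.nonempty_range_iff.mpr (by simp))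
              (fun k => γ * (((n + ((b :: l').take (k + 1)).sum : ℕ)) : ℝ)
                + (((b :: l').drop k).map (fun s => α + β * (s : ℝ))).sum)
            = max (γ * (((n + b : ℕ)) : ℝ) + ((b :: l').map (fun s => α + β * (s : ℝ))).sum)
                ((Finset.range l'.length).sup' (Finset.nonempty_range_iff.mpr hlen.ne')
                  (fun k => γ * (((n + b + (l'.take (k + 1)).sum : ℕ)) : ℝ)
                    + ((l'.drop k).map (fun s => α + β * (s : ℝ))).sum)) := by
        refine (sup'_range_shift
          (fun k => γ * (((n + ((b :: l').take (k + 1)).sum : ℕ)) : ℝ)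
            + (((b :: l').drop k).map (fun s => α + β * (s : ℝ))).sum)
          l'.length hlen).trans ?_
        congr 1 <;> simp [add_assoc]
      refine Eq.trans ?_ (congrArg
        (fun y => max (t + ((b :: l').map (fun s => α + β * (s : ℝ))).sum) y) hshift.symm)
      rw [← max_assoc]
      congr 1
      have hS : ((b :: l').map (fun s => α + β * (s : ℝ))).sum
          = (α + β * (b : ℝ)) + (l'.map (fun s => α + β * (s : ℝ))).sum := by
        simp
      rw [hS, max_add_add_right]
      push_cast
      ring

/-- closed form for the completion time of any batching strategy. -/
theorem complTime_closed_form (α β γ : ℝ) (hα : 0 ≤ α) (hβ : 0 ≤ β) (hγ : 0 ≤ γ)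
    (l : List ℕ) (hl : l ≠ []) (hpos : ∀ b ∈ l, 0 < b) :
    complTime α β γ l =
      (Finset.range l.length).sup' (Finset.nonempty_range_iff.mpr (by simpa using hl))
        (fun k => γ * (((l.take (k + 1)).sum : ℕ) : ℝ)
          + ((l.drop k).map (fun s => α + β * (s : ℝ))).sum) := by
  have h := foldl_snd_eq α β γ l hl 0 0
  rw [complTime, h]
  simp only [Nat.zero_add, zero_add]
  apply max_eq_right
  refine le_trans ?_ (Finset.le_sup'
    (fun k => γ * (((l.take (k + 1)).sum : ℕ) : ℝ)
      + ((l.drop k).map (fun s => α + β * (s : ℝ))).sum)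
    (Finset.mem_range.mpr (List.length_pos_iff.mpr hl)))
  simp only [List.drop_zero]
  have : 0 ≤ γ * (((l.take 1).sum : ℕ) : ℝ) := by positivity
  linarith
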